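/- Every finitely generated abelian group has local retractions: for every finitely generated subgroup H of a finitely generated abelian group G there is a finite-index subgroup K of G containing H and a retraction K → H. -/

import Mathlib

/-- `G` virtually retracts onto the subgroup `H`. -/
def VirtuallyRetractsOnto {G : Type*} [Group G] (H : Subgroup G) : Prop :=
  ∃ K : Subgroup G, K.FiniteIndex ∧ H ≤ K ∧
    ∃ ρ : K →* G, (∀ k : K, ρ k ∈ H) ∧ (∀ k : K, (k : G) ∈ H → ρ k = k)

/-- `G` has local retractions. -/
def HasLocalRetractions (G : Type*) [Group G] : Prop :=
  ∀ H : Subgroup G, H.FG → VirtuallyRetractsOnto H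

/-- Every finitely generated abelian group has local retractions. -/
theorem fg_abelian_hasLocalRetractions (G : Type*) [CommGroup G] (hG : Group.FG G) :
    HasLocalRetractions G := by
  intro H _
  set M := Additive G
  haveI : AddGroup.FG M := GroupFG.iff_add_fg.1 hG
  haveI : Module.Finite ℤ M := Module.Finite.iff_addGroup_fg.mpr ‹_›
  -- the submodule corresponding to H
  set N : Submodule ℤ M := AddSubgroup.toIntSubmodule (Subgroup.toAddSubgroup H) with hN
  -- saturation of N
  set N' : Submodule ℤ M := (Submodule.torsion ℤ (M ⧸ N)).comap N.mkQ with hN'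
  have hNN' : N ≤ N' := by
    intro x hx
    simp only [hN', Submodule.mem_comap]
    have : N.mkQ x = 0 := (Submodule.Quotient.mk_eq_zero N).mpr hx
    rw [this]; exact zero_mem _
  -- M ⧸ N' is torsion-free
  haveI : NoZeroSMulDivisors ℤ (M ⧸ N') := by
    suffices h : Module.IsTorsionFree ℤ (M ⧸ N') by
      haveI : IsAddTorsionFree (M ⧸ N') := .of_isTorsionFree ℤ _
      exact IsAddTorsionFree.to_noZeroSMulDivisors_int
    rw [Submodule.isTorsionFree_iff_torsion_eq_bot]
    rw [eq_bot_iff]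
    rintro x ⟨a, ha⟩
    obtain ⟨m, rfl⟩ := N'.mkQ_surjective x
    have ham : (a : ℤ) • m ∈ N' := by
      rw [← Submodule.Quotient.mk_eq_zero N', Submodule.Quotient.mk_smul]
      simpa [Submonoid.smul_def, Submodule.mkQ_apply] using ha
    simp only [hN', Submodule.mem_comap] at ham
    obtain ⟨b, hb⟩ := ham
    have : (b * a : ℤ) • (N.mkQ m) ∈ (⊥ : Submodule ℤ (M ⧸ N)) := by
      simpa [mul_smul, Submonoid.smul_def] using hb
    have hmN' : m ∈ N' := by
      simp only [hN', Submodule.mem_comap]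
      exact ⟨⟨b * a, mul_mem b.2 a.2⟩, by simpa using this⟩
    simpa using (Submodule.Quotient.mk_eq_zero N').mpr hmN'
  haveI : Module.Free ℤ (M ⧸ N') := Module.free_of_finite_type_torsion_free'
  obtain ⟨s, hs⟩ := Module.projective_lifting_property N'.mkQ LinearMap.id N'.mkQ_surjective
  have hs' : ∀ q, N'.mkQ (s q) = q := fun q => congrFun (congrArg DFunLike.coe hs) q
  have hs'' : ∀ q, (Submodule.Quotient.mk (s q) : M ⧸ N') = q := hs'
  set π : M →ₗ[ℤ] M := LinearMap.id - s ∘ₗ N'.mkQ with hπ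
  have hπ_fix : ∀ m ∈ N', π m = m := by
    intro m hm
    have : N'.mkQ m = 0 := (Submodule.Quotient.mk_eq_zero N').mpr hm
    simp [hπ, this]
  have hπ_mem : ∀ m, π m ∈ N' := by
    intro m
    rw [← Submodule.Quotient.mk_eq_zero N']
    show N'.mkQ (π m) = 0
    simp [hπ, Submodule.mkQ_apply, hs'']
  have hπ_s : ∀ q, π (s q) = 0 := by
    intro q
    simp [hπ, Submodule.mkQ_apply, hs'']
  set K' : Submodule ℤ M := N ⊔ LinearMap.range s with hK'
  have hπK' : ∀ m ∈ K', π m ∈ N := by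
    have : K' ≤ N.comap π := by
      rw [hK', sup_le_iff]
      constructor
      · intro x hx
        simpa [Submodule.mem_comap, hπ_fix x (hNN' hx)] using hx
      · rintro x ⟨q, rfl⟩
        simp [Submodule.mem_comap, hπ_s q]
    exact fun m hm => this hm
  -- M ⧸ K' is finite
  have htors : Module.IsTorsion ℤ (M ⧸ K') := by
    intro x
    obtain ⟨m, rfl⟩ := K'.mkQ_surjective x
    obtain ⟨a, ha⟩ := hπ_mem m
    refine ⟨a, ?_⟩
    have haN : (a : ℤ) • (π m) ∈ N := by
      rw [← Submodule.Quotient.mk_eq_zero N, Submodule.Quotient.mk_smul]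
      simpa [Submonoid.smul_def, Submodule.mkQ_apply] using ha
    have hdec : m = π m + s (N'.mkQ m) := by simp [hπ]
    have : (a : ℤ) • m ∈ K' := by
      rw [hdec, smul_add]
      exact add_mem (le_sup_left (a := N) (b := LinearMap.range s) haN)
        (le_sup_right (a := N) (b := LinearMap.range s)
          (Submodule.smul_mem _ _ ⟨N'.mkQ m, rfl⟩))
    rw [Submonoid.smul_def]
    have h2 : K'.mkQ ((a : ℤ) • m) = 0 := (Submodule.Quotient.mk_eq_zero K').mpr this
    rw [map_smul] at h2
    exact h2
  haveI hfinQ : Finite (M ⧸ K') := Module.finite_of_fg_torsion _ htors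
  -- back to multiplicative world
  set K : Subgroup G := AddSubgroup.toSubgroup' K'.toAddSubgroup with hK
  have hmemK : ∀ g : G, g ∈ K ↔ Additive.ofMul g ∈ K' := fun g => Iff.rfl
  have hmemH : ∀ g : G, g ∈ H ↔ Additive.ofMul g ∈ N := fun g => Iff.rfl
  have hcompat : ∀ a b : M, K'.quotientRel a b →
      QuotientGroup.leftRel K (Additive.toMul a) (Additive.toMul b) := by
    intro a b hab
    have h1 : a - b ∈ K' := (Submodule.quotientRel_def K').mp hab
    have h2 : -a + b ∈ K' := by
      rw [neg_add_eq_sub, ← neg_sub]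
      exact neg_mem h1
    exact QuotientGroup.leftRel_apply.mpr h2
  let f : M ⧸ K' → G ⧸ K :=
    Quotient.map' (s₁ := Submodule.quotientRel K') (s₂ := QuotientGroup.leftRel K)
      (fun m : M => Additive.toMul m) hcompat
  refine ⟨K, ?_, ?_, ?_⟩
  · -- finite index
    have hsurj : Function.Surjective f := by
      intro x
      refine QuotientGroup.induction_on x fun g => ?_
      exact ⟨Submodule.Quotient.mk (Additive.ofMul g), rfl⟩
    haveI : Finite (G ⧸ K) := Finite.of_surjective f hsurj
    exact Subgroup.finiteIndex_of_finite_quotient (H := K)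
  · -- H ≤ K
    intro g hg
    exact (hmemK g).mpr (le_sup_left (a := N) (b := LinearMap.range s) ((hmemH g).mp hg))
  · -- the retraction
    refine ⟨{ toFun := fun k => Additive.toMul (π (Additive.ofMul (k : G)))
              map_one' := congrArg Additive.toMul (map_zero π)
              map_mul' := fun a b =>
                congrArg Additive.toMul
                  (map_add π (Additive.ofMul (a : G)) (Additive.ofMul (b : G))) }, ?_, ?_⟩
    · intro k
      exact (hmemH _).mpr (hπK' _ ((hmemK _).mp k.2))
    · intro k hk
      show Additive.toMul (π (Additive.ofMul (k : G))) = (k : G)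
      rw [hπ_fix _ (hNN' ((hmemH _).mp hk))]
      rfl
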